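/- Let n, m be positive integers, let A ∈ ℝ^{n×n}, C ∈ ℝ^{p×n}, L ∈ ℝ^{n×p}, Cq ∈ ℝ^{q×n}, and set M := A + LC. Let P, Q ∈ ℝ^{n×n} be symmetric positive definite, let L̂φ ≥ Lφ > 0, and assume: (i) MᵀPM − P + Q + L̂φ²·CqᵀCq ⪯ 0; and (ii) 4·p̄⋆²·L̂φ²·λmax(P) + 8·p̄⋆·L̂φ·‖PM‖_F ≤ λmin(Q). Let ψ̃ : ℝⁿ → ℝᵐ satisfy ‖ψ̃(x)‖ ≤ φ̄ and ‖ψ̃(x′) − ψ̃(x)‖ ≤ Lφ·‖x′ − x‖ for all x, x′ ∈ ℝⁿ, and let p⋆, p ∈ ℝ^{m×n} with operator norm ‖p⋆‖ ≤ p̄⋆; set eᵖ := p − p⋆. Let x, e ∈ ℝⁿ and define e⁺ := M e + pᵀψ̃(x + e) − p⋆ᵀψ̃(x). If ‖eᵖ‖ ≤ (λmin(Q) / (8·φ̄·(λmax(P)·L̂φ·p̄⋆ + ‖PM‖_F)))·‖e‖, then (e⁺)ᵀP e⁺ − eᵀP e ≤ −(λmin(Q)/2 + L̂φ²·λmin(CqᵀCq))·‖e‖²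 + φ̄²·λmax(P)·‖eᵖ‖². -/

import Mathlib

open Matrix MeasureTheory Filter

noncomputable def lamMin {n : ℕ} (A : Matrix (Fin n) (Fin n) ℝ) : ℝ :=
  sInf (spectrum ℝ A)

noncomputable def lamMax {n : ℕ} (A : Matrix (Fin n) (Fin n) ℝ) : ℝ :=
  sSup (spectrum ℝ A)

noncomputable def frobNorm {m n : ℕ} (M : Matrix (Fin m) (Fin n) ℝ) : ℝ :=
  Real.sqrt (∑ i, ∑ j, (M i j) ^ 2)

noncomputable def mulVecE {m n : ℕ} (M : Matrix (Fin m) (Fin n) ℝ)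
    (x : EuclideanSpace ℝ (Fin n)) : EuclideanSpace ℝ (Fin m) :=
  Matrix.toEuclideanLin M x

noncomputable def quadForm {n : ℕ} (P : Matrix (Fin n) (Fin n) ℝ)
    (x : EuclideanSpace ℝ (Fin n)) : ℝ :=
  inner ℝ x (mulVecE P x)

noncomputable def opNorm {m n : ℕ} (p : Matrix (Fin m) (Fin n) ℝ) : ℝ :=
  ‖LinearMap.toContinuousLinearMap (Matrix.toEuclideanLin p)‖

lemma mulVecE_eq {m n : ℕ} (A : Matrix (Fin m) (Fin n) ℝ) (x : EuclideanSpace ℝ (Fin n)) :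
    (mulVecE A x : Fin m → ℝ) = A *ᵥ (x : Fin n → ℝ) := rfl

lemma mulVecE_apply {m n : ℕ} (A : Matrix (Fin m) (Fin n) ℝ) (x : EuclideanSpace ℝ (Fin n)) (i : Fin m) :
    mulVecE A x i = (A *ᵥ (x : Fin n → ℝ)) i := rfl

lemma mulVecE_mul {l m n : ℕ} (A : Matrix (Fin l) (Fin m) ℝ) (B : Matrix (Fin m) (Fin n) ℝ)
    (x : EuclideanSpace ℝ (Fin n)) : mulVecE (A * B) x = mulVecE A (mulVecE B x) := by
  ext i
  simp [mulVecE_apply, mulVecE_eq, mulVec_mulVec]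

lemma inner_mulVecE_left {m n : ℕ} (A : Matrix (Fin m) (Fin n) ℝ) (x : EuclideanSpace ℝ (Fin n))
    (y : EuclideanSpace ℝ (Fin m)) :
    (inner ℝ (mulVecE A x) y : ℝ) = inner ℝ x (mulVecE Aᵀ y) := by
  have h : Aᵀ = Aᴴ := by ext i j; simp [conjTranspose_apply]
  rw [h]
  simp only [mulVecE, Matrix.toEuclideanLin_conjTranspose_eq_adjoint]
  rw [LinearMap.adjoint_inner_right]

lemma quadForm_eq_dot {n : ℕ} (T : Matrix (Fin n) (Fin n) ℝ) (x : EuclideanSpace ℝ (Fin n)) :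
    quadForm T x = star (x : Fin n → ℝ) ⬝ᵥ (T *ᵥ (x : Fin n → ℝ)) := by
  simp [quadForm, PiLp.inner_apply, dotProduct, mulVecE_apply, RCLike.inner_apply, mul_comm]

lemma quadForm_nonneg {n : ℕ} {T : Matrix (Fin n) (Fin n) ℝ} (h : T.PosSemidef)
    (x : EuclideanSpace ℝ (Fin n)) : 0 ≤ quadForm T x := by
  rw [quadForm_eq_dot]
  simpa using h.dotProduct_mulVec_nonneg (x : Fin n → ℝ)

lemma quadForm_add {n : ℕ} (S T : Matrix (Fin n) (Fin n) ℝ) (x : EuclideanSpace ℝ (Fin n)) :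
    quadForm (S + T) x = quadForm S x + quadForm T x := by
  simp [quadForm, mulVecE, map_add, inner_add_right]

lemma quadForm_sub {n : ℕ} (S T : Matrix (Fin n) (Fin n) ℝ) (x : EuclideanSpace ℝ (Fin n)) :
    quadForm (S - T) x = quadForm S x - quadForm T x := by
  simp [quadForm, mulVecE, map_sub, inner_sub_right]

lemma quadForm_smul {n : ℕ} (c : ℝ) (T : Matrix (Fin n) (Fin n) ℝ) (x : EuclideanSpace ℝ (Fin n)) :
    quadForm (c • T) x = c * quadForm T x := by
  simp [quadForm, mulVecE, _root_.map_smul, inner_smul_right]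

lemma quadForm_one {n : ℕ} (x : EuclideanSpace ℝ (Fin n)) :
    quadForm 1 x = ‖x‖ ^ 2 := by
  have : mulVecE (1 : Matrix (Fin n) (Fin n) ℝ) x = x := by
    ext i; simp [mulVecE_apply, one_mulVec]
  rw [quadForm, this, real_inner_self_eq_norm_sq]

lemma posSemidef_of_spectrum {n : ℕ} {T : Matrix (Fin n) (Fin n) ℝ} (hT : T.IsHermitian)
    (h : ∀ μ ∈ spectrum ℝ T, 0 ≤ μ) : T.PosSemidef :=
  hT.posSemidef_iff_eigenvalues_nonneg.mpr fun i => h _ (hT.eigenvalues_mem_spectrum_real i)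

lemma isHermitian_smul_one {n : ℕ} (c : ℝ) :
    (c • (1 : Matrix (Fin n) (Fin n) ℝ)).IsHermitian := by
  unfold Matrix.IsHermitian
  ext i j
  simp [Matrix.smul_apply, Matrix.one_apply, conjTranspose_apply]
  by_cases h : i = j <;> simp [h]
  exact fun h' => absurd h'.symm h

lemma rayleigh_lower {n : ℕ} {S : Matrix (Fin n) (Fin n) ℝ} (hS : S.IsHermitian)
    (x : EuclideanSpace ℝ (Fin n)) : lamMin S * ‖x‖ ^ 2 ≤ quadForm S x := by
  set c := lamMin S with hc
  have hsm : c • (1 : Matrix (Fin n) (Fin n) ℝ) = algebraMap ℝ (Matrix (Fin n) (Fin n) ℝ) c := by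
    simp [Algebra.algebraMap_eq_smul_one]
  have hpsd : (S - c • (1 : Matrix (Fin n) (Fin n) ℝ)).PosSemidef := by
    apply posSemidef_of_spectrum (hS.sub (isHermitian_smul_one c))
    intro μ hμ
    rw [hsm, ← spectrum.sub_singleton_eq] at hμ
    obtain ⟨ν, hν, rfl⟩ : ∃ ν ∈ spectrum ℝ S, ν - c = μ := by
      simpa [Set.mem_sub] using hμ
    have hb : BddBelow (spectrum ℝ S) := (Matrix.finite_real_spectrum (A := S)).bddBelow
    have := csInf_le hb hν
    simp only [hc, lamMin]
    linarith
  have h0 := quadForm_nonneg hpsd x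
  rw [quadForm_sub, quadForm_smul, quadForm_one] at h0
  linarith

lemma rayleigh_upper {n : ℕ} {S : Matrix (Fin n) (Fin n) ℝ} (hS : S.IsHermitian)
    (x : EuclideanSpace ℝ (Fin n)) : quadForm S x ≤ lamMax S * ‖x‖ ^ 2 := by
  set c := lamMax S with hc
  have hsm : c • (1 : Matrix (Fin n) (Fin n) ℝ) = algebraMap ℝ (Matrix (Fin n) (Fin n) ℝ) c := by
    simp [Algebra.algebraMap_eq_smul_one]
  have hpsd : (c • (1 : Matrix (Fin n) (Fin n) ℝ) - S).PosSemidef := by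
    apply posSemidef_of_spectrum ((isHermitian_smul_one c).sub hS)
    intro μ hμ
    rw [hsm, ← spectrum.singleton_sub_eq] at hμ
    obtain ⟨ν, hν, rfl⟩ : ∃ ν ∈ spectrum ℝ S, c - ν = μ := by
      simpa [Set.sub_singleton, Set.singleton_sub] using hμ
    have hb : BddAbove (spectrum ℝ S) := (Matrix.finite_real_spectrum (A := S)).bddAbove
    have := le_csSup hb hν
    simp only [hc, lamMax]
    linarith
  have h0 := quadForm_nonneg hpsd x
  rw [quadForm_sub, quadForm_smul, quadForm_one] at h0
  linarith

lemma spectrum_nonempty {n : ℕ} (hn : 0 < n) {S : Matrix (Fin n) (Fin n) ℝ}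
    (hS : S.IsHermitian) : (spectrum ℝ S).Nonempty := by
  rw [hS.spectrum_real_eq_range_eigenvalues]
  exact ⟨_, ⟨⟨0, hn⟩, rfl⟩⟩

lemma lamMin_mem {n : ℕ} (hn : 0 < n) {S : Matrix (Fin n) (Fin n) ℝ} (hS : S.IsHermitian) :
    lamMin S ∈ spectrum ℝ S :=
  (spectrum_nonempty hn hS).csInf_mem (Matrix.finite_real_spectrum)

lemma lamMax_mem {n : ℕ} (hn : 0 < n) {S : Matrix (Fin n) (Fin n) ℝ} (hS : S.IsHermitian) :
    lamMax S ∈ spectrum ℝ S :=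
  (spectrum_nonempty hn hS).csSup_mem (Matrix.finite_real_spectrum)

lemma lamMin_pos {n : ℕ} (hn : 0 < n) {S : Matrix (Fin n) (Fin n) ℝ} (hS : S.PosDef) :
    0 < lamMin S := by
  have := lamMin_mem hn hS.1
  rw [hS.1.spectrum_real_eq_range_eigenvalues] at this
  obtain ⟨i, hi⟩ := this
  rw [← hi]; exact hS.eigenvalues_pos i

lemma lamMax_pos {n : ℕ} (hn : 0 < n) {S : Matrix (Fin n) (Fin n) ℝ} (hS : S.PosDef) :
    0 < lamMax S := by
  have := lamMax_mem hn hS.1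
  rw [hS.1.spectrum_real_eq_range_eigenvalues] at this
  obtain ⟨i, hi⟩ := this
  rw [← hi]; exact hS.eigenvalues_pos i

lemma lamMin_nonneg_of_psd {n : ℕ} (hn : 0 < n) {S : Matrix (Fin n) (Fin n) ℝ}
    (hS : S.PosSemidef) : 0 ≤ lamMin S := by
  have := lamMin_mem hn hS.1
  rw [hS.1.spectrum_real_eq_range_eigenvalues] at this
  obtain ⟨i, hi⟩ := this
  rw [← hi]; exact hS.eigenvalues_nonneg i

lemma frobNorm_nonneg {m n : ℕ} (M : Matrix (Fin m) (Fin n) ℝ) : 0 ≤ frobNorm M :=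
  Real.sqrt_nonneg _

lemma norm_mulVecE_le_frob {m n : ℕ} (A : Matrix (Fin m) (Fin n) ℝ)
    (x : EuclideanSpace ℝ (Fin n)) : ‖mulVecE A x‖ ≤ frobNorm A * ‖x‖ := by
  have hx : ‖x‖ = Real.sqrt (∑ j, (x j) ^ 2) := by
    rw [EuclideanSpace.norm_eq]
    congr 1; apply Finset.sum_congr rfl; intros; rw [Real.norm_eq_abs, sq_abs]
  have hAx : ‖mulVecE A x‖ = Real.sqrt (∑ i, ((A *ᵥ (x : Fin n → ℝ)) i) ^ 2) := by
    rw [EuclideanSpace.norm_eq]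
    congr 1; apply Finset.sum_congr rfl; intros i _
    rw [mulVecE_apply, Real.norm_eq_abs, sq_abs]
  rw [hAx, hx, frobNorm, ← Real.sqrt_mul (by positivity)]
  apply Real.sqrt_le_sqrt
  rw [Finset.sum_mul]
  apply Finset.sum_le_sum
  intro i _
  calc ((A *ᵥ (x : Fin n → ℝ)) i) ^ 2 = (∑ j, A i j * x j) ^ 2 := rfl
    _ ≤ (∑ j, (A i j) ^ 2) * (∑ j, (x j) ^ 2) :=
        Finset.sum_mul_sq_le_sq_mul_sq _ _ _

lemma opNorm_nonneg {m n : ℕ} (A : Matrix (Fin m) (Fin n) ℝ) : 0 ≤ opNorm A :=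
  norm_nonneg _

lemma norm_mulVecE_le_op {m n : ℕ} (A : Matrix (Fin m) (Fin n) ℝ)
    (x : EuclideanSpace ℝ (Fin n)) : ‖mulVecE A x‖ ≤ opNorm A * ‖x‖ :=
  (LinearMap.toContinuousLinearMap (Matrix.toEuclideanLin A)).le_opNorm x

lemma opNorm_transpose {m n : ℕ} (A : Matrix (Fin m) (Fin n) ℝ) :
    opNorm Aᵀ = opNorm A := by
  have h : Aᵀ = Aᴴ := by ext i j; simp [conjTranspose_apply]
  rw [opNorm, h, Matrix.toEuclideanLin_conjTranspose_eq_adjoint,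
    LinearMap.adjoint_toContinuousLinearMap]
  exact (ContinuousLinearMap.adjoint : _ ≃ₗᵢ⋆[ℝ] _).norm_map _

/-- Theorem 3 of the paper (observer gain redesign): improved Lyapunov decrease rate. -/
theorem stmt_6 {n m p q : ℕ} (hn : 0 < n) (hm : 0 < m)
    (A : Matrix (Fin n) (Fin n) ℝ) (C : Matrix (Fin p) (Fin n) ℝ)
    (L : Matrix (Fin n) (Fin p) ℝ) (Cq : Matrix (Fin q) (Fin n) ℝ)
    (M : Matrix (Fin n) (Fin n) ℝ) (hM : M = A + L * C)
    (P Q : Matrix (Fin n) (Fin n) ℝ) (hP : P.PosDef) (hQ : Q.PosDef)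
    (phibar Lphi Lhat pbar : ℝ)
    (hphibar : 0 < phibar) (hLphi : 0 < Lphi) (hLhat : Lphi ≤ Lhat) (hpbar : 0 < pbar)
    (hLyap : (-(Mᵀ * P * M - P + Q + Lhat ^ 2 • (Cqᵀ * Cq))).PosSemidef)
    (hgain : 4 * pbar ^ 2 * Lhat ^ 2 * lamMax P + 8 * pbar * Lhat * frobNorm (P * M) ≤ lamMin Q)
    (ψ : EuclideanSpace ℝ (Fin n) → EuclideanSpace ℝ (Fin m))
    (hbdd : ∀ x, ‖ψ x‖ ≤ phibar)
    (hlip : ∀ x x', ‖ψ x' - ψ x‖ ≤ Lphi * ‖x' - x‖)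
    (pstar p' : Matrix (Fin m) (Fin n) ℝ)
    (hpstar : opNorm pstar ≤ pbar)
    (x e eplus : EuclideanSpace ℝ (Fin n))
    (heplus : eplus = mulVecE M e + mulVecE p'ᵀ (ψ (x + e)) - mulVecE pstarᵀ (ψ x))
    (hcone : opNorm (p' - pstar) ≤
      (lamMin Q / (8 * phibar * (lamMax P * Lhat * pbar + frobNorm (P * M)))) * ‖e‖) :
    quadForm P eplus - quadForm P e ≤
      -(lamMin Q / 2 + Lhat ^ 2 * lamMin (Cqᵀ * Cq)) * ‖e‖ ^ 2
        + phibar ^ 2 * lamMax P * (opNorm (p' - pstar)) ^ 2 := by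

  classical
  -- abbreviations
  set s := ‖e‖ with hs
  set r := opNorm (p' - pstar) with hr
  set F := frobNorm (P * M) with hF
  set lP := lamMax P with hlP
  set lQ := lamMin Q with hlQ
  set lC := lamMin (Cqᵀ * Cq) with hlC
  set H := Lhat with hH
  have hs0 : (0:ℝ) ≤ s := norm_nonneg _
  have hr0 : (0:ℝ) ≤ r := opNorm_nonneg _
  have hF0 : (0:ℝ) ≤ F := frobNorm_nonneg _
  have hlP0 : (0:ℝ) < lP := lamMax_pos hn hP
  have hH0 : (0:ℝ) < H := lt_of_lt_of_le hLphi hLhat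
  have hCqpsd : (Cqᵀ * Cq).PosSemidef := by
    have h : Cqᵀ = Cqᴴ := by ext i j; simp [Matrix.conjTranspose_apply]
    rw [h]; exact Matrix.posSemidef_conjTranspose_mul_self Cq
  have hlC0 : (0:ℝ) ≤ lC := lamMin_nonneg_of_psd hn hCqpsd
  -- decomposition of eplus
  set Δ : EuclideanSpace ℝ (Fin n) → _ := ψ with hΔdef
  set d : EuclideanSpace ℝ (Fin n) :=
    mulVecE pstarᵀ (ψ (x + e) - ψ x) + mulVecE (p' - pstar)ᵀ (ψ (x + e)) with hd
  have heplus' : eplus = mulVecE M e + d := by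
    rw [heplus, hd]
    have h1 : mulVecE p'ᵀ (ψ (x + e)) =
        mulVecE pstarᵀ (ψ (x + e)) + mulVecE (p' - pstar)ᵀ (ψ (x + e)) := by
      have : p'ᵀ = pstarᵀ + (p' - pstar)ᵀ := by
        rw [← Matrix.transpose_add]
        congr 1
        ext i j
        simp
      rw [this]
      show Matrix.toEuclideanLin _ _ = _
      rw [map_add]; rfl
    have h2 : mulVecE pstarᵀ (ψ (x + e)) - mulVecE pstarᵀ (ψ x)
        = mulVecE pstarᵀ (ψ (x + e) - ψ x) := by
      show _ = Matrix.toEuclideanLin _ _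
      rw [map_sub]; rfl
    rw [h1]
    rw [show mulVecE M e + (mulVecE pstarᵀ (ψ (x + e)) + mulVecE (p' - pstar)ᵀ (ψ (x + e)))
        - mulVecE pstarᵀ (ψ x) = mulVecE M e +
        ((mulVecE pstarᵀ (ψ (x + e)) - mulVecE pstarᵀ (ψ x)) +
          mulVecE (p' - pstar)ᵀ (ψ (x + e))) by abel, h2]
  -- bound on ‖d‖
  set D := ‖d‖ with hD
  have hD0 : (0:ℝ) ≤ D := norm_nonneg _
  have hDle : D ≤ pbar * H * s + phibar * r := by
    have ha : ‖mulVecE pstarᵀ (ψ (x + e) - ψ x)‖ ≤ pbar * H * s := by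
      calc ‖mulVecE pstarᵀ (ψ (x + e) - ψ x)‖
          ≤ opNorm pstarᵀ * ‖ψ (x + e) - ψ x‖ := norm_mulVecE_le_op _ _
        _ = opNorm pstar * ‖ψ (x + e) - ψ x‖ := by rw [opNorm_transpose]
        _ ≤ pbar * (Lphi * s) := by
            apply mul_le_mul hpstar _ (norm_nonneg _) (le_of_lt hpbar)
            have := hlip x (x + e)
            simpa [hs, add_sub_cancel_left] using this
        _ ≤ pbar * (H * s) := by
            apply mul_le_mul_of_nonneg_left _ (le_of_lt hpbar)
            exact mul_le_mul_of_nonneg_right hLhat hs0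
        _ = pbar * H * s := by ring
    have hb : ‖mulVecE (p' - pstar)ᵀ (ψ (x + e))‖ ≤ r * phibar := by
      calc ‖mulVecE (p' - pstar)ᵀ (ψ (x + e))‖
          ≤ opNorm (p' - pstar)ᵀ * ‖ψ (x + e)‖ := norm_mulVecE_le_op _ _
        _ = r * ‖ψ (x + e)‖ := by rw [opNorm_transpose, hr]
        _ ≤ r * phibar := mul_le_mul_of_nonneg_left (hbdd _) hr0
    calc D ≤ ‖mulVecE pstarᵀ (ψ (x + e) - ψ x)‖ + ‖mulVecE (p' - pstar)ᵀ (ψ (x + e))‖ :=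
          norm_add_le _ _
      _ ≤ pbar * H * s + phibar * r := by linarith [ha, hb]
  -- quadratic expansion
  have hPsym : Pᵀ = P := by
    have := hP.1
    rw [Matrix.IsHermitian] at this
    calc Pᵀ = Pᴴ := by ext i j; simp [Matrix.conjTranspose_apply]
      _ = P := this
  have hmulP : ∀ u v : EuclideanSpace ℝ (Fin n), mulVecE P (u + v) = mulVecE P u + mulVecE P v := by
    intro u v
    exact map_add (Matrix.toEuclideanLin P) u v
  have hexp : quadForm P eplus = quadForm (Mᵀ * P * M) e
      + 2 * inner ℝ (mulVecE (P * M) e) d + quadForm P d := by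
    rw [heplus', quadForm, hmulP]
    rw [inner_add_left, inner_add_right, inner_add_right]
    have e1 : (inner ℝ (mulVecE M e) (mulVecE P (mulVecE M e)) : ℝ)
        = quadForm (Mᵀ * P * M) e := by
      rw [inner_mulVecE_left M e, ← mulVecE_mul, ← mulVecE_mul]
      rfl
    have e2 : (inner ℝ (mulVecE M e) (mulVecE P d) : ℝ) = inner ℝ (mulVecE (P * M) e) d := by
      have h := inner_mulVecE_left P (mulVecE M e) d
      rw [hPsym] at h
      rw [← h, ← mulVecE_mul]
    have e3 : (inner ℝ d (mulVecE P (mulVecE M e)) : ℝ) = inner ℝ (mulVecE (P * M) e) d := by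
      rw [← mulVecE_mul]; exact real_inner_comm _ _
    have e4 : (inner ℝ d (mulVecE P d) : ℝ) = quadForm P d := rfl
    rw [e1, e2, e3, e4]
    ring
  -- Lyapunov bound
  have hLyapQ : quadForm (Mᵀ * P * M) e ≤ quadForm P e - quadForm Q e
      - H ^ 2 * quadForm (Cqᵀ * Cq) e := by
    have h0 := quadForm_nonneg hLyap e
    have hneg : quadForm (-(Mᵀ * P * M - P + Q + H ^ 2 • (Cqᵀ * Cq))) e
        = -(quadForm (Mᵀ * P * M) e - quadForm P e + quadForm Q e
            + H ^ 2 * quadForm (Cqᵀ * Cq) e) := by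
      rw [show -(Mᵀ * P * M - P + Q + H ^ 2 • (Cqᵀ * Cq))
          = ((P - (Mᵀ * P * M)) - Q) - H ^ 2 • (Cqᵀ * Cq) by
            ext i j
            simp [Matrix.add_apply, Matrix.sub_apply, Matrix.neg_apply, Matrix.smul_apply]
            ring,
        quadForm_sub, quadForm_sub, quadForm_sub, quadForm_smul]
      ring
    rw [hneg] at h0
    linarith
  -- Rayleigh bounds
  have hRQ : lQ * s ^ 2 ≤ quadForm Q e := rayleigh_lower hQ.1 e
  have hRC : lC * s ^ 2 ≤ quadForm (Cqᵀ * Cq) e := rayleigh_lower hCqpsd.1 e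
  have hRP : quadForm P d ≤ lP * D ^ 2 := rayleigh_upper hP.1 d
  -- cross term
  have hcross : (inner ℝ (mulVecE (P * M) e) d : ℝ) ≤ F * s * D := by
    calc (inner ℝ (mulVecE (P * M) e) d : ℝ) ≤ ‖mulVecE (P * M) e‖ * D :=
        real_inner_le_norm _ _
      _ ≤ (F * s) * D := mul_le_mul_of_nonneg_right (norm_mulVecE_le_frob _ _) hD0
      _ = F * s * D := by ring
  -- combine
  have hmain : quadForm P eplus - quadForm P e ≤
      -(lQ + H ^ 2 * lC) * s ^ 2 + 2 * F * s * D + lP * D ^ 2 := by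
    rw [hexp]
    have hC2 : H ^ 2 * (lC * s ^ 2) ≤ H ^ 2 * quadForm (Cqᵀ * Cq) e :=
      mul_le_mul_of_nonneg_left hRC (sq_nonneg H)
    linarith [hRQ, hLyapQ, hRP, hcross, hC2]
  -- scalar estimates
  set K := pbar * H * s + phibar * r with hK
  have hK0 : (0:ℝ) ≤ K := by positivity
  have hDK2 : D ^ 2 ≤ K ^ 2 := by
    have := pow_le_pow_left₀ hD0 hDle 2
    simpa using this
  have hterm1 : 2 * F * s * D ≤ 2 * F * s * K :=
    mul_le_mul_of_nonneg_left hDle (by positivity)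
  have hden : (0:ℝ) < 8 * phibar * (lP * H * pbar + F) := by positivity
  have hcone' : 8 * phibar * (lP * H * pbar + F) * r ≤ lQ * s := by
    have := mul_le_mul_of_nonneg_left hcone (le_of_lt hden)
    calc 8 * phibar * (lP * H * pbar + F) * r
        ≤ 8 * phibar * (lP * H * pbar + F) * (lQ / (8 * phibar * (lP * H * pbar + F)) * s) :=
          this
      _ = lQ * s := by
          rw [← mul_assoc, mul_comm (8 * phibar * (lP * H * pbar + F))
            (lQ / (8 * phibar * (lP * H * pbar + F))), div_mul_cancel₀ _ (ne_of_gt hden)]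
  have hfinal : 2 * F * s * K + lP * K ^ 2 ≤ lQ / 2 * s ^ 2 + phibar ^ 2 * lP * r ^ 2 := by
    have hg : (2 * F * pbar * H + lP * pbar ^ 2 * H ^ 2) * s ^ 2 ≤ lQ / 4 * s ^ 2 := by
      have h4 : 2 * F * pbar * H + lP * pbar ^ 2 * H ^ 2 ≤ lQ / 4 := by
        linarith [hgain]
      exact mul_le_mul_of_nonneg_right h4 (sq_nonneg s)
    have hc : 2 * phibar * (F + lP * pbar * H) * r * s ≤ lQ / 4 * s ^ 2 := by
      have h5 := mul_le_mul_of_nonneg_right hcone' hs0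
      linarith [h5]
    have hKexp : 2 * F * s * K + lP * K ^ 2
        = (2 * F * pbar * H + lP * pbar ^ 2 * H ^ 2) * s ^ 2
          + 2 * phibar * (F + lP * pbar * H) * r * s + phibar ^ 2 * lP * r ^ 2 := by
      rw [hK]; ring
    rw [hKexp]; linarith
  calc quadForm P eplus - quadForm P e
      ≤ -(lQ + H ^ 2 * lC) * s ^ 2 + 2 * F * s * D + lP * D ^ 2 := hmain
    _ ≤ -(lQ + H ^ 2 * lC) * s ^ 2 + 2 * F * s * K + lP * K ^ 2 := by
        have h6 : lP * D ^ 2 ≤ lP * K ^ 2 := mul_le_mul_of_nonneg_left hDK2 (le_of_lt hlP0)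
        linarith [hterm1, h6]
    _ ≤ -(lQ + H ^ 2 * lC) * s ^ 2 + lQ / 2 * s ^ 2 + phibar ^ 2 * lP * r ^ 2 := by
        linarith
    _ = -(lQ / 2 + H ^ 2 * lC) * s ^ 2 + phibar ^ 2 * lP * r ^ 2 := by ring
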